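/- Let m > n ≥ 1 and ψ an approximating function. If ∑_{r=1}^∞ ψ(r)ⁿ r^{m-n-1} converges, then W₀(m,n;ψ) has mn-dimensional Lebesgue measure zero. -/

import Mathlib

open MeasureTheory Filter
open scoped ENNReal NNReal

noncomputable def qnorm {m : ℕ} (q : Fin m → ℤ) : ℝ := ‖(fun i => (q i : ℝ) : Fin m → ℝ)‖

def cube (m n : ℕ) : Set (Fin m → Fin n → ℝ) :=
  {X | ∀ i j, X i j ∈ Set.Icc (-(1/2) : ℝ) (1/2)}

def W0 (m n : ℕ) (ψ : ℝ → ℝ) : Set (Fin m → Fin n → ℝ) :=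
  {X | X ∈ cube m n ∧
    {q : Fin m → ℤ | q ≠ 0 ∧
      ‖(fun j => ∑ i, (q i : ℝ) * X i j : Fin n → ℝ)‖ < ψ (qnorm q)}.Infinite}

noncomputable def Hf {α : Type*} [EMetricSpace α] [MeasurableSpace α] [BorelSpace α]
    (f : ℝ → ℝ) : Measure α :=
  Measure.mkMetric (fun d => ENNReal.ofReal (f d.toReal))

def Rq {m : ℕ} (q : Fin m → ℤ) : ℕ := Finset.univ.sup fun i => (q i).natAbs

lemma detM (m : ℕ) (q : Fin m → ℤ) (k : Fin m) :
    ((1 : Matrix (Fin m) (Fin m) ℝ).updateRow k (fun i => (q i : ℝ))).det = (q k : ℝ) := by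
  have h : (fun i => (q i : ℝ)) = ∑ j, (fun i => (q i : ℝ)) j • (1 : Matrix (Fin m) (Fin m) ℝ) j := by
    ext i
    simp [Matrix.one_apply, Finset.sum_apply, Pi.smul_apply]
  rw [h, Matrix.det_updateRow_sum]
  simp

noncomputable def Lmap (m n : ℕ) (q : Fin m → ℤ) (k : Fin m) :
    (Fin m → Fin n → ℝ) →ₗ[ℝ] (Fin m → Fin n → ℝ) where
  toFun X := fun i j => if i = k then ∑ i', (q i' : ℝ) * X i' j else X i j
  map_add' X Y := by
    ext i j
    by_cases h : i = k <;> simp [h, mul_add, Finset.sum_add_distrib]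
  map_smul' c X := by
    ext i j
    by_cases h : i = k <;> simp [h, Finset.mul_sum] <;> ring_nf
    · congr 1; ext i'; ring

noncomputable def curryE (m n : ℕ) : ((Fin m × Fin n) → ℝ) ≃ₗ[ℝ] (Fin m → Fin n → ℝ) where
  toFun f := fun i j => f (i, j)
  invFun X := fun p => X p.1 p.2
  map_add' _ _ := rfl
  map_smul' _ _ := rfl
  left_inv f := rfl
  right_inv X := rfl

lemma det_Lmap (m n : ℕ) (q : Fin m → ℤ) (k : Fin m) :
    LinearMap.det (Lmap m n q k) = ((q k : ℝ)) ^ n := by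
  have hconj := LinearMap.det_conj (Lmap m n q k) (curryE m n).symm
  rw [← hconj]
  rw [← LinearMap.det_toMatrix' ]
  have : (LinearMap.toMatrix' ((curryE m n).symm.toLinearMap ∘ₗ (Lmap m n q k) ∘ₗ ((curryE m n).symm.symm).toLinearMap))
      = Matrix.blockDiagonal (fun _ : Fin n => (1 : Matrix (Fin m) (Fin m) ℝ).updateRow k (fun i => (q i : ℝ))) := by
    ext ⟨i, j⟩ ⟨i', j'⟩
    rw [LinearMap.toMatrix'_apply]
    simp only [LinearEquiv.symm_symm, LinearMap.coe_comp, LinearEquiv.coe_coe, Function.comp_apply]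
    show (Lmap m n q k (curryE m n (Pi.single (i', j') 1))) i j = _
    simp only [Lmap, curryE, LinearMap.coe_mk, AddHom.coe_mk, LinearEquiv.coe_mk, Equiv.coe_fn_mk,
      Matrix.blockDiagonal_apply, Matrix.updateRow_apply, Prod.mk.injEq]
    by_cases hik : i = k <;> by_cases hjj : j = j' <;>
      simp [hik, hjj, Matrix.one_apply, Prod.ext_iff, mul_ite, Finset.sum_ite_eq', Pi.single_apply]
  rw [this, Matrix.det_blockDiagonal, detM]
  simp

lemma slab_bound (m n : ℕ) (q : Fin m → ℤ) (k : Fin m) (hk : q k ≠ 0) (δ : ℝ) (hδ : 0 ≤ δ) :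
    volume {X : Fin m → Fin n → ℝ | (∀ i j, X i j ∈ Set.Icc (-(1/2):ℝ) (1/2)) ∧
        ∀ j, |∑ i, (q i : ℝ) * X i j| < δ}
      ≤ (ENNReal.ofReal (2 * δ / |(q k : ℝ)|)) ^ n := by
  set A := {X : Fin m → Fin n → ℝ | (∀ i j, X i j ∈ Set.Icc (-(1/2):ℝ) (1/2)) ∧
        ∀ j, |∑ i, (q i : ℝ) * X i j| < δ} with hA
  set L := Lmap m n q k with hL
  have himg : volume (L '' A) = ENNReal.ofReal |LinearMap.det (L : _ →ₗ[ℝ] _)| * volume A :=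
    Measure.addHaar_image_linearMap volume L A
  have hqk : (0:ℝ) < |(q k : ℝ)| := by
    simp only [abs_pos]
    exact_mod_cast hk
  -- the image is inside a box
  have hsub : L '' A ⊆ Set.pi Set.univ (fun i => Set.pi Set.univ
      (fun _ : Fin n => if i = k then Set.Ioo (-δ) δ else Set.Icc (-(1/2):ℝ) (1/2))) := by
    rintro Z ⟨X, hX, rfl⟩
    intro i _ j _
    have hLX : (L X) i j = if i = k then ∑ i', (q i' : ℝ) * X i' j else X i j := rfl
    rw [hLX]
    by_cases h : i = k
    · rw [if_pos h, if_pos h]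
      exact Set.mem_Ioo.2 (abs_lt.1 (hX.2 j))
    · rw [if_neg h, if_neg h]
      exact hX.1 i j
  have hbox : volume (Set.pi Set.univ (fun i => Set.pi Set.univ
      (fun _ : Fin n => if i = k then Set.Ioo (-δ) δ else Set.Icc (-(1/2):ℝ) (1/2))))
      = ENNReal.ofReal (2 * δ) ^ n := by
    rw [volume_pi_pi]
    have : ∀ i : Fin m, volume (Set.pi Set.univ
        (fun _ : Fin n => if i = k then Set.Ioo (-δ) δ else Set.Icc (-(1/2):ℝ) (1/2)))
        = if i = k then ENNReal.ofReal (2 * δ) ^ n else 1 := by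
      intro i
      rw [volume_pi_pi]
      by_cases h : i = k <;> simp [h, Real.volume_Ioo, Real.volume_Icc] <;> ring_nf
      · rw [ENNReal.ofReal_mul hδ, mul_pow]; norm_num
      · norm_num
    simp only [this]
    rw [Finset.prod_ite_eq' Finset.univ k]
    simp
  have himg_le : volume (L '' A) ≤ ENNReal.ofReal (2 * δ) ^ n :=
    le_trans (measure_mono hsub) (le_of_eq hbox)
  rw [himg, det_Lmap, abs_pow] at himg_le
  have h1 : ENNReal.ofReal (|(q k : ℝ)| ^ n) * volume A ≤ ENNReal.ofReal (2 * δ) ^ n := himg_le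
  have h2 : ENNReal.ofReal (|(q k : ℝ)| ^ n) ≠ 0 := by
    simp [ENNReal.ofReal_eq_zero, not_le, pow_pos hqk]
    exact fun h => absurd h hk
  have h3 : ENNReal.ofReal (|(q k : ℝ)| ^ n) ≠ ⊤ := ENNReal.ofReal_ne_top
  rw [mul_comm] at h1
  rw [← ENNReal.le_div_iff_mul_le (Or.inl h2) (Or.inl h3)] at h1
  refine le_trans h1 ?_
  rw [← ENNReal.ofReal_pow (by positivity), ← ENNReal.ofReal_pow (by positivity),
    div_pow, ENNReal.ofReal_div_of_pos (by positivity)]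

lemma pow_diff_le (b : ℕ) : ∀ mm : ℕ, (b+2)^mm ≤ b^mm + 2*mm*(b+2)^(mm-1) := by
  intro mm
  induction mm with
  | zero => simp
  | succ mm ih =>
    have h1 : (b+2)^(mm+1) = (b+2)^mm * (b+2) := by ring
    have h2 : (b+2)^mm * (b+2) ≤ (b^mm + 2*mm*(b+2)^(mm-1)) * (b+2) :=
      Nat.mul_le_mul_right _ ih
    have h3 : 2*mm*(b+2)^(mm-1) * (b+2) ≤ 2*mm*(b+2)^mm := by
      cases mm with
      | zero => simp
      | succ mm' =>
        have : (b+2)^(mm'+1-1) * (b+2) = (b+2)^(mm'+1) := by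
          simp [pow_succ]
        calc 2*(mm'+1)*(b+2)^(mm'+1-1) * (b+2) = 2*(mm'+1)*((b+2)^(mm'+1-1)*(b+2)) := by ring
        _ = 2*(mm'+1)*(b+2)^(mm'+1) := by rw [this]
        _ ≤ 2*(mm'+1)*(b+2)^(mm'+1) := le_rfl
    have h4 : b^mm * (b+2) = b^(mm+1) + 2*b^mm := by ring
    have h5 : b^mm ≤ (b+2)^mm := Nat.pow_le_pow_left (by omega) mm
    calc (b+2)^(mm+1) = (b+2)^mm * (b+2) := by ring
    _ ≤ (b^mm + 2*mm*(b+2)^(mm-1)) * (b+2) := h2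
    _ = b^mm * (b+2) + 2*mm*(b+2)^(mm-1) * (b+2) := by ring
    _ ≤ b^(mm+1) + 2*b^mm + 2*mm*(b+2)^mm := by omega
    _ ≤ b^(mm+1) + 2*(b+2)^mm + 2*mm*(b+2)^mm := by omega
    _ = b^(mm+1) + 2*(mm+1)*(b+2)^mm := by ring

noncomputable def boxF (m ρ : ℕ) : Finset (Fin m → ℤ) := Fintype.piFinset fun _ => Finset.Icc (-(ρ:ℤ)) ρ

lemma card_boxF (m ρ : ℕ) : (boxF m ρ).card = (2*ρ+1)^m := by
  rw [boxF, Fintype.card_piFinset]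
  have : (Finset.Icc (-(ρ:ℤ)) ρ).card = 2*ρ+1 := by
    rw [Int.card_Icc]
    omega
  simp [this]

lemma mem_boxF {m ρ : ℕ} (q : Fin m → ℤ) : q ∈ boxF m ρ ↔ ∀ i, (q i).natAbs ≤ ρ := by
  rw [boxF, Fintype.mem_piFinset]
  constructor <;> intro h i <;> have := h i <;> simp [Finset.mem_Icc] at * <;> omega

lemma card_sphere (m : ℕ) (hm : 0 < m) (r : ℕ) :
    Nat.card {q : Fin m → ℤ // Rq q = r + 1} ≤ 2*m*(2*r+3)^(m-1) := by
  have : Nonempty (Fin m) := ⟨⟨0, hm⟩⟩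
  have hsub1 : {q : Fin m → ℤ | Rq q = r+1} ⊆ ↑(boxF m (r+1) \ boxF m r) := by
    intro q hq
    simp only [Set.mem_setOf_eq] at hq
    simp only [Finset.coe_sdiff, Set.mem_diff, Finset.mem_coe]
    constructor
    · rw [mem_boxF]
      intro i
      have : (q i).natAbs ≤ Rq q := Finset.le_sup (f := fun i => (q i).natAbs) (Finset.mem_univ i)
      omega
    · rw [mem_boxF]
      push_neg
      obtain ⟨i, _, hi⟩ := Finset.exists_mem_eq_sup Finset.univ Finset.univ_nonempty
        (fun i => (q i).natAbs)
      refine ⟨i, ?_⟩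
      have : (q i).natAbs = r + 1 := by rw [← hi]; exact hq
      omega
  calc Nat.card {q : Fin m → ℤ // Rq q = r + 1}
      = {q : Fin m → ℤ | Rq q = r+1}.ncard := Nat.card_coe_set_eq _
    _ ≤ (↑(boxF m (r+1) \ boxF m r) : Set (Fin m → ℤ)).ncard :=
        Set.ncard_le_ncard hsub1 (Finset.finite_toSet _)
    _ = (boxF m (r+1) \ boxF m r).card := Set.ncard_coe_finset _
    _ = (boxF m (r+1)).card - (boxF m r).card := by
        rw [Finset.card_sdiff_of_subset]
        intro q hq
        rw [mem_boxF] at *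
        intro i
        exact le_trans (hq i) (by omega)
    _ = (2*(r+1)+1)^m - (2*r+1)^m := by rw [card_boxF, card_boxF]
    _ ≤ 2*m*(2*r+3)^(m-1) := by
        have := pow_diff_le (2*r+1) m
        have h23 : 2*(r+1)+1 = (2*r+1)+2 := by ring
        have h23' : 2*r+3 = (2*r+1)+2 := by ring
        rw [h23, h23']
        omega

lemma qnorm_eq {m : ℕ} (hm : 0 < m) (q : Fin m → ℤ) : qnorm q = (Rq q : ℝ) := by
  have : Nonempty (Fin m) := ⟨⟨0, hm⟩⟩
  apply le_antisymm
  · apply (pi_norm_le_iff_of_nonneg (by positivity)).2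
    intro i
    rw [Real.norm_eq_abs, ← Int.cast_abs]
    have h1 : |q i| = ((q i).natAbs : ℤ) := Int.abs_eq_natAbs _
    rw [h1]
    have h2 : (q i).natAbs ≤ Rq q := Finset.le_sup (f := fun i => (q i).natAbs) (Finset.mem_univ i)
    exact_mod_cast h2
  · obtain ⟨i, _, hi⟩ := Finset.exists_mem_eq_sup (Finset.univ : Finset (Fin m))
      Finset.univ_nonempty (fun i => (q i).natAbs)
    have h1 : (Rq q : ℝ) = |(q i : ℝ)| := by
      rw [← Int.cast_abs, Int.abs_eq_natAbs]
      have : Rq q = (q i).natAbs := hi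
      exact_mod_cast congrArg (fun x : ℕ => (x : ℝ)) this
    rw [h1, ← Real.norm_eq_abs]
    exact norm_le_pi_norm (fun i => (q i : ℝ)) i

lemma Rq_pos {m : ℕ} (q : Fin m → ℤ) (hq : q ≠ 0) : 0 < Rq q := by
  obtain ⟨i, hi⟩ : ∃ i, q i ≠ 0 := by
    by_contra h
    push_neg at h
    exact hq (funext h)
  have h1 : 0 < (q i).natAbs := Int.natAbs_pos.2 hi
  exact lt_of_lt_of_le h1 (Finset.le_sup (f := fun i => (q i).natAbs) (Finset.mem_univ i))

lemma exists_max {m : ℕ} (hm : 0 < m) (q : Fin m → ℤ) : ∃ k, (q k).natAbs = Rq q := by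
  have : Nonempty (Fin m) := ⟨⟨0, hm⟩⟩
  obtain ⟨i, _, hi⟩ := Finset.exists_mem_eq_sup (Finset.univ : Finset (Fin m))
    Finset.univ_nonempty (fun i => (q i).natAbs)
  exact ⟨i, hi.symm⟩

lemma measure_sq (m n : ℕ) (hm : 0 < m) (ψ : ℝ → ℝ) (hψpos : ∀ r > 0, 0 < ψ r)
    (q : Fin m → ℤ) (hq : q ≠ 0) :
    volume {X : Fin m → Fin n → ℝ | X ∈ cube m n ∧
        ‖(fun j => ∑ i, (q i : ℝ) * X i j : Fin n → ℝ)‖ < ψ (qnorm q)}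
      ≤ ENNReal.ofReal (2 * ψ (Rq q) / (Rq q)) ^ n := by
  obtain ⟨k, hk⟩ := exists_max hm q
  have hR : 0 < Rq q := Rq_pos q hq
  have hRR : (0:ℝ) < (Rq q : ℝ) := by exact_mod_cast hR
  have hδ : 0 < ψ ((Rq q : ℝ)) := hψpos _ hRR
  have hqk : q k ≠ 0 := by
    intro h
    rw [h] at hk
    simp at hk
    omega
  have hqkabs : |(q k : ℝ)| = (Rq q : ℝ) := by
    rw [← Int.cast_abs, Int.abs_eq_natAbs, hk]
    simp
  have hsub : {X : Fin m → Fin n → ℝ | X ∈ cube m n ∧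
        ‖(fun j => ∑ i, (q i : ℝ) * X i j : Fin n → ℝ)‖ < ψ (qnorm q)}
      ⊆ {X : Fin m → Fin n → ℝ | (∀ i j, X i j ∈ Set.Icc (-(1/2):ℝ) (1/2)) ∧
        ∀ j, |∑ i, (q i : ℝ) * X i j| < ψ ((Rq q : ℝ))} := by
    intro X hX
    refine ⟨hX.1, ?_⟩
    have h1 := hX.2
    rw [qnorm_eq hm] at h1
    intro j
    have h2 := (pi_norm_lt_iff hδ).1 h1 j
    rwa [Real.norm_eq_abs] at h2
  refine le_trans (measure_mono hsub) ?_
  have := slab_bound m n q k hqk (ψ ((Rq q : ℝ))) hδ.le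
  rwa [hqkabs] at this

set_option maxHeartbeats 2000000 in
theorem stmt2 (m n : ℕ) (hn : 1 ≤ n) (hmn : n < m) (ψ : ℝ → ℝ)
    (hψ : AntitoneOn ψ (Set.Ioi 0)) (hψpos : ∀ r > 0, 0 < ψ r)
    (hψ0 : Tendsto ψ atTop (nhds 0))
    (hsum : Summable (fun r : ℕ => ψ (r + 1) ^ n * ((r : ℝ) + 1) ^ (m - n - 1 : ℕ))) :
    volume (W0 m n ψ) = 0 := by
  classical
  have hm : 0 < m := by omega
  set S : (Fin m → ℤ) → Set (Fin m → Fin n → ℝ) := fun q =>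
    if q = 0 then ∅ else
      {X | X ∈ cube m n ∧ ‖(fun j => ∑ i, (q i : ℝ) * X i j : Fin n → ℝ)‖ < ψ (qnorm q)}
    with hSdef
  set g : (Fin m → ℤ) → ℝ≥0∞ := fun q =>
    if q = 0 then 0 else ENNReal.ofReal (2 * ψ (Rq q) / (Rq q)) ^ n with hgdef
  have hSg : ∀ q, volume (S q) ≤ g q := by
    intro q
    by_cases h : q = 0
    · simp [hSdef, hgdef, h]
    · simp only [hSdef, hgdef, if_neg h]
      exact measure_sq m n hm ψ hψpos q h
  -- summability of g
  have hg_ne_top : ∑' q, g q ≠ ⊤ := by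
    have h1 : ∑' q, g q = ∑' (r : ℕ), ∑' (b : {q : Fin m → ℤ // Rq q = r}), g b.val := by
      rw [← (Equiv.sigmaFiberEquiv (Rq : (Fin m → ℤ) → ℕ)).tsum_eq g, ENNReal.tsum_sigma']
      rfl
    -- fibers are finite
    have hfin : ∀ r : ℕ, {q : Fin m → ℤ | Rq q = r}.Finite := by
      intro r
      apply Set.Finite.subset (Set.Finite.pi (fun i : Fin m => Set.finite_Icc (-(r:ℤ)) r))
      intro q hq
      simp only [Set.mem_setOf_eq] at hq
      intro i _
      simp only [Set.mem_Icc]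
      have : (q i).natAbs ≤ Rq q := Finset.le_sup (f := fun i => (q i).natAbs) (Finset.mem_univ i)
      rw [hq] at this
      omega
    have hT0 : ∑' (b : {q : Fin m → ℤ // Rq q = 0}), g b.val = 0 := by
      rw [ENNReal.tsum_eq_zero]
      rintro ⟨q, hq⟩
      have : q = 0 := by
        by_contra h
        exact absurd hq (by have := Rq_pos q h; omega)
      simp [hgdef, this]
    -- bound on each positive fiber
    have hTr : ∀ r : ℕ, ∑' (b : {q : Fin m → ℤ // Rq q = r + 1}), g b.val
        ≤ ((2*m*(2*r+3)^(m-1) : ℕ) : ℝ≥0∞) *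
          ENNReal.ofReal (2 * ψ (((r+1 : ℕ) : ℝ)) / (((r+1 : ℕ) : ℝ))) ^ n := by
      intro r
      haveI : Fintype {q : Fin m → ℤ // Rq q = r + 1} := (hfin (r+1)).fintype
      have hgb : ∀ b : {q : Fin m → ℤ // Rq q = r + 1},
          g b.val = ENNReal.ofReal (2 * ψ (((r+1 : ℕ) : ℝ)) / (((r+1 : ℕ) : ℝ))) ^ n := by
        rintro ⟨q, hq⟩
        have hq0 : q ≠ 0 := by
          intro h
          rw [h] at hq
          have h0 : Rq (0 : Fin m → ℤ) = 0 :=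
            Nat.eq_zero_of_le_zero (Finset.sup_le fun i _ => le_rfl)
          rw [h0] at hq
          omega
        simp only [hgdef, if_neg hq0]
        rw [hq]
      rw [tsum_fintype]
      calc ∑ b : {q : Fin m → ℤ // Rq q = r + 1}, g b.val
          = ∑ _b : {q : Fin m → ℤ // Rq q = r + 1},
            ENNReal.ofReal (2 * ψ (((r+1 : ℕ) : ℝ)) / (((r+1 : ℕ) : ℝ))) ^ n :=
            Finset.sum_congr rfl (fun b _ => hgb b)
        _ = (Fintype.card {q : Fin m → ℤ // Rq q = r + 1} : ℝ≥0∞) *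
            ENNReal.ofReal (2 * ψ (((r+1 : ℕ) : ℝ)) / (((r+1 : ℕ) : ℝ))) ^ n := by
            rw [Finset.sum_const, Finset.card_univ, nsmul_eq_mul]
        _ ≤ _ := by
            gcongr
            have h := card_sphere m hm r
            rw [Nat.card_eq_fintype_card] at h
            exact_mod_cast h
    -- compare with the convergent series
    set C : ℕ := 2*m*3^(m-1)*2^n with hC
    have hreal : ∀ r : ℕ, ((2*m*(2*r+3)^(m-1) : ℕ) : ℝ≥0∞) *
          ENNReal.ofReal (2 * ψ (((r+1 : ℕ) : ℝ)) / (((r+1 : ℕ) : ℝ))) ^ n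
        ≤ ENNReal.ofReal ((C : ℝ) * (ψ ((r : ℝ) + 1) ^ n * ((r : ℝ) + 1) ^ (m - n - 1 : ℕ))) := by
      intro r
      have hρ : ((r+1 : ℕ) : ℝ) = (r : ℝ) + 1 := by push_cast; ring
      set ρ : ℝ := (r : ℝ) + 1 with hρdef
      have hρpos : 0 < ρ := by positivity
      have hψρ : 0 < ψ ρ := hψpos ρ hρpos
      have hx : 0 ≤ 2 * ψ ρ / ρ := by positivity
      rw [hρ, ← ENNReal.ofReal_pow hx, ← ENNReal.ofReal_natCast, ← ENNReal.ofReal_mul (by positivity)]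
      apply ENNReal.ofReal_le_ofReal
      have hKle : ((2*m*(2*r+3)^(m-1) : ℕ) : ℝ) ≤ 2*m*3^(m-1)*ρ^(m-1) := by
        have h1 : (0:ℝ) ≤ 2*(r:ℝ)+3 := by positivity
        have h2 : 2*(r:ℝ)+3 ≤ 3*ρ := by rw [hρdef]; linarith
        calc ((2*m*(2*r+3)^(m-1) : ℕ) : ℝ) = 2*(m:ℝ)*(2*(r:ℝ)+3)^(m-1) := by push_cast; ring
          _ ≤ 2*(m:ℝ)*(3*ρ)^(m-1) := by gcongr
          _ = 2*m*3^(m-1)*ρ^(m-1) := by rw [mul_pow]; ring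
      have hpow : (2 * ψ ρ / ρ) ^ n = 2^n * ψ ρ ^ n / ρ ^ n := by
        rw [div_pow, mul_pow]
      calc ((2*m*(2*r+3)^(m-1) : ℕ) : ℝ) * (2 * ψ ρ / ρ) ^ n
          ≤ (2*m*3^(m-1)*ρ^(m-1)) * (2^n * ψ ρ ^ n / ρ ^ n) := by
            rw [hpow]
            apply mul_le_mul hKle le_rfl (by positivity) (by positivity)
        _ = (C : ℝ) * (ψ ρ ^ n * (ρ^(m-1) / ρ ^ n)) := by
            push_cast [hC]
            ring
        _ = (C : ℝ) * (ψ ρ ^ n * ρ ^ (m - n - 1 : ℕ)) := by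
            congr 2
            rw [div_eq_iff (by positivity : (ρ:ℝ)^n ≠ 0), ← pow_add]
            congr 1
            omega
    have hsum' : Summable (fun r : ℕ => (C : ℝ) * (ψ ((r : ℝ) + 1) ^ n * ((r : ℝ) + 1) ^ (m - n - 1 : ℕ))) :=
      hsum.mul_left _
    have hfinal : ∑' (r : ℕ), ENNReal.ofReal ((C : ℝ) * (ψ ((r : ℝ) + 1) ^ n * ((r : ℝ) + 1) ^ (m - n - 1 : ℕ))) ≠ ⊤ := by
      rw [← ENNReal.ofReal_tsum_of_nonneg (fun r => by
        have : 0 < ψ ((r : ℝ) + 1) := hψpos _ (by positivity)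
        positivity) hsum']
      exact ENNReal.ofReal_ne_top
    rw [h1, tsum_eq_zero_add' ENNReal.summable, hT0, zero_add]
    exact ne_top_of_le_ne_top hfinal
      (ENNReal.tsum_le_tsum (fun r => le_trans (hTr r) (hreal r)))
  -- Borel–Cantelli
  have hBC : volume (limsup S cofinite) = 0 :=
    measure_limsup_cofinite_eq_zero (ne_top_of_le_ne_top hg_ne_top (ENNReal.tsum_le_tsum hSg))
  have hW : W0 m n ψ ⊆ limsup S cofinite := by
    intro X hX
    rw [Filter.cofinite.limsup_set_eq]
    apply Set.Infinite.mono ?_ hX.2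
    intro q hq
    simp only [Set.mem_setOf_eq, hSdef, if_neg hq.1]
    exact ⟨hX.1, hq.2⟩
  exact le_antisymm (hBC ▸ measure_mono hW) (zero_le)
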